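/- Let Y be a Poisson random variable with mean M > 0 and let H_n = ∑_{i=1}^n 1/i be the n-th harmonic number (H₀ = 0). Then Var(H_Y) ≤ 2/M. -/

import Mathlib

noncomputable def harmonicR (n : ℕ) : ℝ := ∑ i ∈ Finset.range n, (1 : ℝ) / (i + 1)

namespace PHAux

noncomputable def pp (M : ℝ) (k : ℕ) : ℝ := M ^ k * Real.exp (-M) / Nat.factorial k

variable {M : ℝ} (hM : 0 < M)

include hM in
lemma pp_nonneg (k : ℕ) : 0 ≤ pp M k := by unfold pp; positivity

lemma pp_succ (k : ℕ) : ((k : ℝ) + 1) * pp M (k + 1) = M * pp M k := by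
  unfold pp
  rw [Nat.factorial_succ]
  push_cast
  have h1 : (0:ℝ) < Nat.factorial k := by positivity
  field_simp
  ring

include hM in
lemma summable_pp_mul_of_le {g : ℕ → ℝ} (hg : ∀ k, |g k| ≤ 4 ^ k) :
    Summable (fun k => pp M k * g k) := by
  have h4 : Summable (fun k => (4 * M) ^ k / (Nat.factorial k) * Real.exp (-M)) :=
    (Real.summable_pow_div_factorial (4 * M)).mul_right _
  refine Summable.of_abs (Summable.of_nonneg_of_le (fun k => abs_nonneg _) (fun k => ?_) h4)
  rw [abs_mul, abs_of_nonneg (pp_nonneg hM k)]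
  unfold pp
  rw [mul_pow]
  have h1 : (0:ℝ) < Nat.factorial k := by positivity
  rw [div_mul_eq_mul_div, div_mul_eq_mul_div, div_le_div_iff₀ h1 h1]
  have he : (0:ℝ) < Real.exp (-M) := Real.exp_pos _
  calc M ^ k * Real.exp (-M) * |g k| * ↑k.factorial
      ≤ M ^ k * Real.exp (-M) * 4 ^ k * ↑k.factorial := by
        have := hg k
        nlinarith [mul_pos (mul_pos (pow_pos hM k) he) h1]
    _ = 4 ^ k * M ^ k * Real.exp (-M) * ↑k.factorial := by ring

lemma cast_le_four_pow (k : ℕ) : (k : ℝ) ≤ 4 ^ k := by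
  calc (k : ℝ) ≤ 2 ^ k := by exact_mod_cast (Nat.lt_two_pow_self (n := k)).le
    _ ≤ 4 ^ k := pow_le_pow_left₀ (by norm_num) (by norm_num) k

include hM in
lemma summable_pp : Summable (pp M) := by
  have := summable_pp_mul_of_le hM (g := fun _ => (1:ℝ)) (fun k => by
    rw [abs_one]; exact one_le_pow₀ (by norm_num))
  simpa using this

include hM in
lemma summable_pp_mul_id : Summable (fun k => pp M k * k) := by
  refine summable_pp_mul_of_le hM fun k => ?_
  rw [abs_of_nonneg (Nat.cast_nonneg k)]
  exact cast_le_four_pow k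

include hM in
lemma tsum_pp : ∑' k, pp M k = 1 := by
  unfold pp
  have : ∀ k : ℕ, M ^ k * Real.exp (-M) / Nat.factorial k
      = (M ^ k / Nat.factorial k) * Real.exp (-M) := fun k => by ring
  simp_rw [this]
  rw [tsum_mul_right]
  have hexp : ∑' k : ℕ, M ^ k / (Nat.factorial k : ℝ) = Real.exp M := by
    rw [Real.exp_eq_exp_ℝ, NormedSpace.exp_eq_tsum_div]
  rw [hexp, ← Real.exp_add]
  simp

include hM in
lemma tsum_pp_mul_id : ∑' k, pp M k * k = M := by
  have hs := summable_pp_mul_id hM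
  rw [Summable.tsum_eq_zero_add hs]
  simp only [Nat.cast_zero, mul_zero, zero_add, Nat.cast_succ]
  have : ∀ k : ℕ, pp M (k + 1) * ((k : ℝ) + 1) = M * pp M k := fun k => by
    rw [← pp_succ]; ring
  simp_rw [this]
  rw [tsum_mul_left, tsum_pp hM, mul_one]

include hM in
lemma summable_pp_centered : Summable (fun k => pp M k * ((k : ℝ) - M)) := by
  have h := (summable_pp_mul_id hM).sub ((summable_pp hM).mul_right M)
  refine h.congr fun k => by ring

include hM in
lemma finite_id (i : ℕ) :
    ∑ j ∈ Finset.range (i + 1), pp M j * (M - j) = M * pp M i := by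
  induction i with
  | zero => simp [pp]; ring
  | succ n ih =>
    rw [Finset.sum_range_succ, ih]
    have := pp_succ (M := M) n
    push_cast
    nlinarith [this]

include hM in
lemma tail_centered (i : ℕ) :
    ∑' t, pp M (i + 1 + t) * ((i + 1 + t : ℕ) - M : ℝ) = M * pp M i := by
  have hs := summable_pp_centered hM
  have key := Summable.sum_add_tsum_nat_add (f := fun k => pp M k * ((k : ℝ) - M)) (i + 1) hs
  have htot : ∑' k, pp M k * ((k : ℝ) - M) = 0 := by
    have h1 := Summable.tsum_sub (summable_pp_mul_id hM) ((summable_pp hM).mul_right M)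
    have : ∑' k, pp M k * ((k : ℝ) - M) = (∑' k, pp M k * k) - ∑' k, pp M k * M := by
      rw [← h1]; refine tsum_congr fun k => by ring
    rw [this, tsum_pp_mul_id hM, tsum_mul_right, tsum_pp hM]
    ring
  have hneg : ∑ j ∈ Finset.range (i + 1), pp M j * ((j : ℝ) - M) = -(M * pp M i) := by
    rw [← finite_id hM i]
    rw [← Finset.sum_neg_distrib]
    refine Finset.sum_congr rfl fun j _ => by ring
  rw [htot, hneg] at key
  have : ∀ t : ℕ, pp M (t + (i + 1)) * ((t + (i + 1) : ℕ) - M : ℝ)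
      = pp M (i + 1 + t) * ((i + 1 + t : ℕ) - M : ℝ) := fun t => by
    rw [add_comm t (i+1)]
  rw [← tsum_congr this]
  linarith [key]

include hM in
lemma tail_sum (i : ℕ) :
    ∑' t, pp M (i + 1 + t) = 1 - ∑ j ∈ Finset.range (i + 1), pp M j := by
  have key := Summable.sum_add_tsum_nat_add (f := pp M) (i + 1) (summable_pp hM)
  rw [tsum_pp hM] at key
  have : ∀ t : ℕ, pp M (t + (i + 1)) = pp M (i + 1 + t) := fun t => by rw [add_comm]
  rw [← tsum_congr this]
  linarith [key]

include hM in
lemma summable_tail_lin (i j : ℕ) :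
    Summable (fun t => pp M (i + 1 + t) * ((i + 1 + t : ℕ) - (j : ℝ))) := by
  have h1 : Summable (fun t => pp M (t + (i + 1)) * ((t + (i + 1) : ℕ) - M : ℝ)) := by
    have := (summable_pp_centered hM).comp_injective (add_left_injective (i+1))
    exact this
  have h2 : Summable (fun t => pp M (t + (i + 1)) * (M - (j:ℝ))) := by
    have := ((summable_pp hM).comp_injective (add_left_injective (i+1))).mul_right (M - (j:ℝ))
    exact this
  have h3 := h1.add h2
  have h4 : Summable (fun t => pp M (t + (i + 1)) * ((t + (i + 1) : ℕ) - (j : ℝ))) := by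
    refine h3.congr fun t => by push_cast; ring
  refine h4.congr fun t => by rw [add_comm t (i+1)]

include hM in
lemma tail_lin (i j : ℕ) (hj : j ≤ i) :
    ∑' t, pp M (i + 1 + t) * ((i + 1 + t : ℕ) - (j : ℝ))
      = M * pp M i + ((M : ℝ) - j) * (1 - ∑ l ∈ Finset.range (i + 1), pp M l) := by
  have h1 : Summable (fun t => pp M (i + 1 + t) * ((i + 1 + t : ℕ) - M : ℝ)) := by
    have := (summable_pp_centered hM).comp_injective (add_left_injective (i+1))
    refine this.congr fun t => by simp [add_comm t (i+1)]
  have h2 : Summable (fun t => pp M (i + 1 + t) * ((M : ℝ) - j)) := by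
    have := ((summable_pp hM).comp_injective (add_left_injective (i+1))).mul_right ((M:ℝ) - j)
    refine this.congr fun t => by simp [add_comm t (i+1)]
  have key : ∑' t, pp M (i + 1 + t) * ((i + 1 + t : ℕ) - (j : ℝ))
      = (∑' t, pp M (i + 1 + t) * ((i + 1 + t : ℕ) - M : ℝ))
        + ∑' t, pp M (i + 1 + t) * ((M : ℝ) - j) := by
    rw [← Summable.tsum_add h1 h2]
    refine tsum_congr fun t => by push_cast; ring
  rw [key, tail_centered hM i, tsum_mul_right, tail_sum hM i]
  ring

include hM in
lemma S_id (i : ℕ) :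
    ∑ j ∈ Finset.range (i + 1),
      pp M j * ∑' t, pp M (i + 1 + t) * ((i + 1 + t : ℕ) - (j : ℝ))
      = M * pp M i := by
  have : ∀ j ∈ Finset.range (i + 1),
      pp M j * ∑' t, pp M (i + 1 + t) * ((i + 1 + t : ℕ) - (j : ℝ))
        = pp M j * (M * pp M i) + (pp M j * ((M:ℝ) - j)) * (1 - ∑ l ∈ Finset.range (i + 1), pp M l) := by
    intro j hj
    rw [tail_lin hM i j (by simpa using Nat.lt_succ_iff.mp (Finset.mem_range.mp hj))]
    ring
  rw [Finset.sum_congr rfl this, Finset.sum_add_distrib, ← Finset.sum_mul, ← Finset.sum_mul,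
    finite_id hM i]
  ring


lemma cast_sq_le_four_pow (k : ℕ) : (k : ℝ) ^ 2 ≤ 4 ^ k := by
  have h : (k : ℝ) ≤ 2 ^ k := by exact_mod_cast (Nat.lt_two_pow_self (n := k)).le
  calc (k : ℝ) ^ 2 ≤ ((2:ℝ) ^ k) ^ 2 := pow_le_pow_left₀ (Nat.cast_nonneg k) h 2
    _ = 4 ^ k := by rw [← pow_mul, mul_comm, pow_mul]; norm_num

lemma harmonicR_nonneg (n : ℕ) : 0 ≤ harmonicR n := by unfold harmonicR; positivity

lemma harmonicR_le (n : ℕ) : harmonicR n ≤ n := by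
  unfold harmonicR
  calc ∑ i ∈ Finset.range n, (1:ℝ)/(i+1) ≤ ∑ i ∈ Finset.range n, 1 := by
        refine Finset.sum_le_sum fun i _ => ?_
        rw [div_le_one (by positivity)]
        norm_num
    _ = n := by simp

include hM in
lemma summable_pp_f : Summable (fun k => pp M k * harmonicR k) :=
  summable_pp_mul_of_le hM fun k => by
    rw [abs_of_nonneg (harmonicR_nonneg k)]
    exact (harmonicR_le k).trans (cast_le_four_pow k)

include hM in
lemma summable_pp_f_sq : Summable (fun k => pp M k * harmonicR k ^ 2) :=
  summable_pp_mul_of_le hM fun k => by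
    rw [abs_of_nonneg (by positivity)]
    calc harmonicR k ^ 2 ≤ (k:ℝ) ^ 2 :=
          pow_le_pow_left₀ (harmonicR_nonneg k) (harmonicR_le k) 2
      _ ≤ 4 ^ k := cast_sq_le_four_pow k

/-- abbreviation for the mean -/
noncomputable def mu (M : ℝ) : ℝ := ∑' k, pp M k * harmonicR k

/-- second moment -/
noncomputable def e2 (M : ℝ) : ℝ := ∑' k, pp M k * harmonicR k ^ 2

include hM in
lemma var_eq : ∑' k, pp M k * (harmonicR k - mu M) ^ 2 = e2 M - mu M ^ 2 := by
  have h : ∀ k : ℕ, pp M k * (harmonicR k - mu M) ^ 2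
      = (pp M k * harmonicR k ^ 2 - 2 * mu M * (pp M k * harmonicR k)) + mu M ^ 2 * pp M k :=
    fun k => by ring
  rw [tsum_congr h]
  have hs1 := (summable_pp_f_sq hM).sub ((summable_pp_f hM).mul_left (2 * mu M))
  have hs2 := (summable_pp hM).mul_left (mu M ^ 2)
  rw [Summable.tsum_add hs1 hs2,
    Summable.tsum_sub (summable_pp_f_sq hM) ((summable_pp_f hM).mul_left (2 * mu M)),
    tsum_mul_left, tsum_mul_left, tsum_pp hM]
  unfold e2 mu
  ring

/-- the symmetric double-sum integrand -/
noncomputable def gg (M : ℝ) (x : ℕ × ℕ) : ℝ :=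
  pp M x.1 * pp M x.2 * (harmonicR x.2 - harmonicR x.1) ^ 2

include hM in
lemma summable_pp_sq : Summable (fun k => pp M k * (k:ℝ)^2) :=
  summable_pp_mul_of_le hM fun k => by
    rw [abs_of_nonneg (by positivity)]; exact cast_sq_le_four_pow k

include hM in
set_option maxHeartbeats 1000000 in
lemma summable_gg : Summable (gg M) := by
  have hf1 : Summable (fun k => pp M k * (2*(k:ℝ)^2)) := by
    refine ((summable_pp_sq hM).mul_left 2).congr fun k => by ring
  have hA : Summable (fun x : ℕ × ℕ => (pp M x.1 * (2*(x.1:ℝ)^2)) * pp M x.2) :=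
    Summable.mul_of_nonneg hf1 (summable_pp hM)
      (fun k => mul_nonneg (pp_nonneg hM k) (by positivity)) (fun k => pp_nonneg hM k)
  have hB : Summable (fun x : ℕ × ℕ => pp M x.1 * (pp M x.2 * (2*(x.2:ℝ)^2))) :=
    Summable.mul_of_nonneg (summable_pp hM) hf1
      (fun k => pp_nonneg hM k) (fun k => mul_nonneg (pp_nonneg hM k) (by positivity))
  refine Summable.of_nonneg_of_le (fun x => ?_) (fun x => ?_) (hA.add hB)
  · exact mul_nonneg (mul_nonneg (pp_nonneg hM _) (pp_nonneg hM _)) (sq_nonneg _)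
  · obtain ⟨j, k⟩ := x
    simp only [gg]
    have h1 : (harmonicR k - harmonicR j)^2 ≤ 2*(j:ℝ)^2 + 2*(k:ℝ)^2 := by
      nlinarith [harmonicR_le j, harmonicR_le k, harmonicR_nonneg j, harmonicR_nonneg k]
    have h2 : (0:ℝ) ≤ pp M j * pp M k := mul_nonneg (pp_nonneg hM _) (pp_nonneg hM _)
    nlinarith [h2]

include hM in
lemma inner_eq (j : ℕ) :
    ∑' k, gg M (j, k) = pp M j * (e2 M - 2 * harmonicR j * mu M + harmonicR j ^ 2) := by
  have h : ∀ k : ℕ, gg M (j, k)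
      = pp M j * ((pp M k * harmonicR k ^ 2 - (2 * harmonicR j) * (pp M k * harmonicR k))
          + harmonicR j ^ 2 * pp M k) := fun k => by simp only [gg]; ring
  rw [tsum_congr h, tsum_mul_left]
  have hs1 := (summable_pp_f_sq hM).sub ((summable_pp_f hM).mul_left (2 * harmonicR j))
  have hs2 := (summable_pp hM).mul_left (harmonicR j ^ 2)
  rw [Summable.tsum_add hs1 hs2,
    Summable.tsum_sub (summable_pp_f_sq hM) ((summable_pp_f hM).mul_left (2 * harmonicR j)),
    tsum_mul_left, tsum_mul_left, tsum_pp hM]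
  unfold e2 mu
  ring

include hM in
lemma tsum_gg : ∑' x : ℕ × ℕ, gg M x = 2 * (e2 M - mu M ^ 2) := by
  rw [Summable.tsum_prod' (summable_gg hM) (fun j => ((summable_gg hM).prod_factor j))]
  rw [tsum_congr (fun j => inner_eq hM j)]
  have h : ∀ j : ℕ, pp M j * (e2 M - 2 * harmonicR j * mu M + harmonicR j ^ 2)
      = (pp M j * e2 M - (2 * mu M) * (pp M j * harmonicR j)) + pp M j * harmonicR j ^ 2 :=
    fun j => by ring
  rw [tsum_congr h]
  have hs1 := ((summable_pp hM).mul_right (e2 M)).sub ((summable_pp_f hM).mul_left (2 * mu M))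
  rw [Summable.tsum_add hs1 (summable_pp_f_sq hM),
    Summable.tsum_sub ((summable_pp hM).mul_right (e2 M)) ((summable_pp_f hM).mul_left (2 * mu M)),
    tsum_mul_right, tsum_mul_left, tsum_pp hM]
  unfold e2 mu
  ring


/-- strictly-ordered pairs integrand: the `(j, j+m+1)` term -/
noncomputable def tt (M : ℝ) (x : ℕ × ℕ) : ℝ := gg M (x.1, x.1 + x.2 + 1)

/-- the equivalence between `ℕ × ℕ` and the strict upper triangle -/
def triEquiv : ℕ × ℕ ≃ {x : ℕ × ℕ // x.1 < x.2} where
  toFun x := ⟨(x.1, x.1 + x.2 + 1), by simp⟩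
  invFun y := (y.1.1, y.1.2 - y.1.1 - 1)
  left_inv x := by
    obtain ⟨a, b⟩ := x
    simp only [Prod.mk.injEq, true_and]
    omega
  right_inv y := by
    obtain ⟨⟨a, b⟩, h⟩ := y
    have h' : a < b := h
    simp only [Subtype.mk.injEq, Prod.mk.injEq, true_and]
    omega

include hM in
lemma summable_tt : Summable (tt M) := by
  have hinj : Function.Injective (fun x : ℕ × ℕ => (x.1, x.1 + x.2 + 1)) := by
    intro a b h
    simp only [Prod.mk.injEq] at h
    obtain ⟨h1, h2⟩ := h
    exact Prod.ext h1 (by omega)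
  exact (summable_gg hM).comp_injective hinj

lemma gg_symm (x : ℕ × ℕ) : gg M (x.2, x.1) = gg M x := by
  simp only [gg]; ring

include hM in
lemma tsum_gg_eq_two_tsum_tt : ∑' x : ℕ × ℕ, gg M x = 2 * ∑' x : ℕ × ℕ, tt M x := by
  classical
  set A : Set (ℕ × ℕ) := {x : ℕ × ℕ | x.1 < x.2} with hA
  have hsub1 : Summable ((gg M) ∘ (Subtype.val : A → ℕ × ℕ)) := (summable_gg hM).subtype A
  have hsub2 : Summable ((gg M) ∘ (Subtype.val : ↥Aᶜ → ℕ × ℕ)) := (summable_gg hM).subtype Aᶜ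
  have hsplit := Summable.tsum_add_tsum_compl (f := gg M) (s := A) hsub1 hsub2
  -- the complement sum equals the triangle sum
  have hcompl : ∑' x : ↥Aᶜ, gg M x = ∑' x : A, gg M x := by
    rw [tsum_subtype, tsum_subtype]
    have hfun : Aᶜ.indicator (gg M) = (A.indicator (gg M)) ∘ Prod.swap := by
      funext x
      obtain ⟨j, k⟩ := x
      by_cases h : j < k
      · have h1 : ((j,k) : ℕ × ℕ) ∉ Aᶜ := by simp [hA, h]
        have h2 : ((k,j) : ℕ × ℕ) ∉ A := by simp [hA]; omega
        simp [Set.indicator_of_notMem h1, Set.indicator_of_notMem h2, Function.comp]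
      · rcases Nat.lt_or_ge k j with h' | h'
        · have h1 : ((j,k) : ℕ × ℕ) ∈ Aᶜ := by simp [hA]; omega
          have h2 : ((k,j) : ℕ × ℕ) ∈ A := by simp [hA]; omega
          simp only [Function.comp, Prod.swap_prod_mk,
            Set.indicator_of_mem h1, Set.indicator_of_mem h2]
          exact (gg_symm (j, k)).symm
        · have hjk : j = k := by omega
          subst hjk
          have h1 : ((j,j) : ℕ × ℕ) ∈ Aᶜ := by simp [hA]
          have h2 : ((j,j) : ℕ × ℕ) ∉ A := by simp [hA]
          simp only [Function.comp, Prod.swap_prod_mk,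
            Set.indicator_of_mem h1, Set.indicator_of_notMem h2]
          simp [gg]
    rw [hfun]
    exact ((Equiv.prodComm ℕ ℕ).tsum_eq (A.indicator (gg M)))
  have htri : ∑' x : A, gg M (↑x : ℕ × ℕ) = ∑' x : ℕ × ℕ, tt M x := by
    exact (triEquiv.tsum_eq (fun y : {x : ℕ × ℕ // x.1 < x.2} => gg M y.1)).symm
  rw [← hsplit, hcompl, htri]
  ring

include hM in
lemma var_eq_tsum_tt :
    ∑' k, pp M k * (harmonicR k - mu M) ^ 2 = ∑' x : ℕ × ℕ, tt M x := by
  have h1 := tsum_gg_eq_two_tsum_tt hM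
  rw [tsum_gg hM] at h1
  rw [var_eq hM]
  linarith


lemma harmonicR_diff (j m : ℕ) :
    harmonicR (j + m + 1) - harmonicR j = ∑ c ∈ Finset.range (m + 1), (1:ℝ)/(j + c + 1) := by
  unfold harmonicR
  rw [show j + m + 1 = j + (m+1) by ring, Finset.sum_range_add, add_sub_cancel_left]
  refine Finset.sum_congr rfl fun c _ => ?_
  push_cast
  ring_nf

/-- square of increments -/
noncomputable def dsq (i : ℕ) : ℝ := (1 / ((i : ℝ) + 1)) ^ 2

lemma dsq_nonneg (i : ℕ) : 0 ≤ dsq i := sq_nonneg _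

include hM in
lemma tt_nonneg (x : ℕ × ℕ) : 0 ≤ tt M x :=
  mul_nonneg (mul_nonneg (pp_nonneg hM _) (pp_nonneg hM _)) (sq_nonneg _)

include hM in
open Finset in
lemma cs_bound (j m : ℕ) :
    tt M (j, m) ≤ pp M j * pp M (j + m + 1) *
      (((m : ℝ) + 1) * ∑ c ∈ Finset.range (m + 1), dsq (j + c)) := by
  have hd := harmonicR_diff j m
  have hcs : (harmonicR (j + m + 1) - harmonicR j) ^ 2
      ≤ ((m : ℝ) + 1) * ∑ c ∈ Finset.range (m + 1), dsq (j + c) := by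
    rw [hd]
    have := sq_sum_le_card_mul_sum_sq (s := Finset.range (m + 1))
      (f := fun c => (1 : ℝ) / (j + c + 1))
    simp only [Finset.card_range] at this
    calc (∑ c ∈ Finset.range (m+1), (1:ℝ)/(j + c + 1)) ^ 2
        ≤ (m + 1 : ℕ) * ∑ c ∈ Finset.range (m+1), ((1:ℝ)/(j + c + 1))^2 := this
      _ = ((m : ℝ) + 1) * ∑ c ∈ Finset.range (m + 1), dsq (j + c) := by
          push_cast
          congr 1
          refine Finset.sum_congr rfl fun c _ => ?_
          unfold dsq
          push_cast
          ring
  have hpp : 0 ≤ pp M j * pp M (j + m + 1) :=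
    mul_nonneg (pp_nonneg hM _) (pp_nonneg hM _)
  calc tt M (j, m) = pp M j * pp M (j + m + 1) * (harmonicR (j + m + 1) - harmonicR j) ^ 2 := rfl
    _ ≤ _ := mul_le_mul_of_nonneg_left hcs hpp


/-- summand after Cauchy–Schwarz -/
noncomputable def bb (M : ℝ) (j m c : ℕ) : ℝ :=
  pp M j * pp M (j + m + 1) * (((m : ℝ) + 1) * dsq (j + c))

include hM in
lemma bb_nonneg (j m c : ℕ) : 0 ≤ bb M j m c :=
  mul_nonneg (mul_nonneg (pp_nonneg hM _) (pp_nonneg hM _))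
    (mul_nonneg (by positivity) (dsq_nonneg _))

include hM in
lemma step1 : ∑' x : ℕ × ℕ, ENNReal.ofReal (tt M x)
    ≤ ∑' (j : ℕ) (c : ℕ) (t : ℕ), ENNReal.ofReal (bb M j (c + t) c) := by
  have h0 : ∑' x : ℕ × ℕ, ENNReal.ofReal (tt M x)
      = ∑' (j : ℕ) (m : ℕ), ENNReal.ofReal (tt M (j, m)) :=
    ENNReal.tsum_prod (f := fun j m => ENNReal.ofReal (tt M (j, m)))
  rw [h0]
  have key : ∀ j m : ℕ, ENNReal.ofReal (tt M (j, m))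
      ≤ ∑' c : ℕ, (if c ≤ m then ENNReal.ofReal (bb M j m c) else 0) := by
    intro j m
    have h1 : tt M (j, m) ≤ ∑ c ∈ Finset.range (m + 1), bb M j m c := by
      refine (cs_bound hM j m).trans_eq ?_
      rw [Finset.mul_sum, Finset.mul_sum]
      refine Finset.sum_congr rfl fun c _ => ?_
      unfold bb
      ring
    calc ENNReal.ofReal (tt M (j, m))
        ≤ ENNReal.ofReal (∑ c ∈ Finset.range (m + 1), bb M j m c) :=
          ENNReal.ofReal_le_ofReal h1
      _ = ∑ c ∈ Finset.range (m + 1), ENNReal.ofReal (bb M j m c) :=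
          ENNReal.ofReal_sum_of_nonneg fun c _ => bb_nonneg hM j m c
      _ = ∑' c : ℕ, (if c ≤ m then ENNReal.ofReal (bb M j m c) else 0) := by
          rw [tsum_eq_sum (s := Finset.range (m + 1))
            (fun c hc => if_neg (fun h => hc (Finset.mem_range.mpr (Nat.lt_succ_of_le h))))]
          refine (Finset.sum_congr rfl fun c hc => ?_).symm
          exact if_pos (by simpa [Nat.lt_succ_iff] using Finset.mem_range.mp hc)
  calc ∑' (j : ℕ) (m : ℕ), ENNReal.ofReal (tt M (j, m))
      ≤ ∑' (j : ℕ) (m : ℕ) (c : ℕ), (if c ≤ m then ENNReal.ofReal (bb M j m c) else 0) :=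
        ENNReal.tsum_le_tsum fun j => ENNReal.tsum_le_tsum fun m => key j m
    _ = ∑' (j : ℕ) (c : ℕ) (m : ℕ), (if c ≤ m then ENNReal.ofReal (bb M j m c) else 0) := by
        refine tsum_congr fun j => ?_
        exact ENNReal.tsum_comm
    _ = ∑' (j : ℕ) (c : ℕ) (t : ℕ), ENNReal.ofReal (bb M j (c + t) c) := by
        refine tsum_congr fun j => tsum_congr fun c => ?_
        have hinj : Function.Injective (fun t : ℕ => c + t) := fun a b h => by simpa using h
        rw [← Function.Injective.tsum_eq hinj
          (f := fun m => if c ≤ m then ENNReal.ofReal (bb M j m c) else 0) ?_]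
        · refine tsum_congr fun t => ?_
          exact if_pos (Nat.le_add_right c t)
        · intro m hm
          simp only [Function.mem_support, ne_eq, ite_eq_right_iff, not_forall] at hm
          obtain ⟨h, -⟩ := hm
          exact ⟨m - c, by simp; omega⟩


/-- inner tail sum in `ENNReal` -/
noncomputable def FF (M : ℝ) (y : ℕ × ℕ) : ENNReal :=
  ∑' t : ℕ, ENNReal.ofReal (bb M y.1 (y.2 + t) y.2)

include hM in
lemma FF_eval (i jj : ℕ) (hjj : jj ≤ i) :
    FF M (jj, i - jj) = ENNReal.ofReal
      (dsq i * (pp M jj * ∑' t, pp M (i + 1 + t) * ((i + 1 + t : ℕ) - (jj : ℝ)))) := by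
  unfold FF
  have hterm : ∀ t : ℕ, bb M jj ((i - jj) + t) (i - jj)
      = dsq i * (pp M jj * (pp M (i + 1 + t) * ((i + 1 + t : ℕ) - (jj : ℝ)))) := by
    intro t
    unfold bb
    have hidx : jj + ((i - jj) + t) + 1 = i + 1 + t := by omega
    have hidx2 : jj + (i - jj) = i := by omega
    rw [hidx, hidx2]
    have hcast : ((i - jj + t : ℕ) : ℝ) + 1 = ((i + 1 + t : ℕ) : ℝ) - (jj : ℝ) := by
      push_cast [Nat.cast_sub hjj]
      ring
    rw [hcast]
    ring
  simp only [hterm]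
  rw [← ENNReal.ofReal_tsum_of_nonneg]
  · rw [tsum_mul_left, tsum_mul_left]
  · intro t
    have h1 : (0:ℝ) ≤ ((i + 1 + t : ℕ) : ℝ) - (jj : ℝ) := by
      push_cast
      have : (jj : ℝ) ≤ i := by exact_mod_cast hjj
      linarith [Nat.cast_nonneg (α := ℝ) t]
    exact mul_nonneg (dsq_nonneg i)
      (mul_nonneg (pp_nonneg hM jj) (mul_nonneg (pp_nonneg hM _) h1))
  · exact (((summable_tail_lin hM i jj).mul_left (pp M jj)).mul_left (dsq i))

include hM in
lemma step2 : ∑' (j : ℕ) (c : ℕ) (t : ℕ), ENNReal.ofReal (bb M j (c + t) c)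
    = ∑' i : ℕ, ENNReal.ofReal (dsq i * (M * pp M i)) := by
  have h0 : ∑' (j : ℕ) (c : ℕ) (t : ℕ), ENNReal.ofReal (bb M j (c + t) c)
      = ∑' y : ℕ × ℕ, FF M y :=
    (ENNReal.tsum_prod (f := fun j c => FF M (j, c))).symm
  rw [h0]
  -- reindex via (j, c) ↦ (j + c, j)
  set G : ℕ × ℕ → ENNReal := fun z => if z.2 ≤ z.1 then FF M (z.2, z.1 - z.2) else 0 with hG
  have hφinj : Function.Injective (fun y : ℕ × ℕ => (y.1 + y.2, y.1)) := by
    intro a b h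
    simp only [Prod.mk.injEq] at h
    exact Prod.ext h.2 (by omega)
  have hcomp : ∀ y : ℕ × ℕ, G ((fun y : ℕ × ℕ => (y.1 + y.2, y.1)) y) = FF M y := by
    intro ⟨a, b⟩
    simp only [hG]
    rw [if_pos (by simp)]
    have : a + b - a = b := by omega
    rw [this]
  have hsupp : Function.support G ⊆ Set.range (fun y : ℕ × ℕ => (y.1 + y.2, y.1)) := by
    intro z hz
    simp only [hG, Function.mem_support, ne_eq, ite_eq_right_iff, not_forall] at hz
    obtain ⟨h, -⟩ := hz
    obtain ⟨a, b⟩ := z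
    simp only at h
    exact ⟨(b, a - b), by simp only [Prod.mk.injEq]; exact ⟨by omega, trivial⟩⟩
  have h1 : ∑' y : ℕ × ℕ, FF M y = ∑' z : ℕ × ℕ, G z := by
    rw [← Function.Injective.tsum_eq hφinj hsupp]
    exact tsum_congr hcomp |>.symm
  rw [h1]
  have h2 : ∑' z : ℕ × ℕ, G z = ∑' (i : ℕ) (jj : ℕ), G (i, jj) :=
    ENNReal.tsum_prod (f := fun i jj => G (i, jj))
  rw [h2]
  refine tsum_congr fun i => ?_
  have h3 : ∑' jj : ℕ, G (i, jj) = ∑ jj ∈ Finset.range (i + 1), FF M (jj, i - jj) := by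
    rw [tsum_eq_sum (s := Finset.range (i + 1))
      (fun jj hjj => if_neg (fun h => hjj (Finset.mem_range.mpr (by omega))))]
    refine Finset.sum_congr rfl fun jj hjj => ?_
    simp only [hG]
    rw [if_pos (by simpa [Nat.lt_succ_iff] using Finset.mem_range.mp hjj)]
  rw [h3]
  have h4 : ∀ jj ∈ Finset.range (i + 1), FF M (jj, i - jj)
      = ENNReal.ofReal
        (dsq i * (pp M jj * ∑' t, pp M (i + 1 + t) * ((i + 1 + t : ℕ) - (jj : ℝ)))) :=
    fun jj hjj => FF_eval hM i jj (by simpa [Nat.lt_succ_iff] using Finset.mem_range.mp hjj)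
  rw [Finset.sum_congr rfl h4,
    ← ENNReal.ofReal_sum_of_nonneg (fun jj hjj => ?_)]
  · congr 1
    rw [← Finset.mul_sum, S_id hM i]
  · have hnn : ∀ t:ℕ, (0:ℝ) ≤ pp M (i + 1 + t) * ((i + 1 + t : ℕ) - (jj : ℝ)) := by
      intro t
      refine mul_nonneg (pp_nonneg hM _) ?_
      have hjj' : jj ≤ i := by simpa [Nat.lt_succ_iff] using Finset.mem_range.mp hjj
      have : (jj : ℝ) ≤ i := by exact_mod_cast hjj'
      push_cast
      linarith [Nat.cast_nonneg (α := ℝ) t]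
    exact mul_nonneg (dsq_nonneg i) (mul_nonneg (pp_nonneg hM jj) (tsum_nonneg hnn))


include hM in
lemma pointwise_final (i : ℕ) : dsq i * (M * pp M i) ≤ (2 / M) * pp M (i + 2) := by
  have h1 := pp_succ (M := M) i
  have h2 := pp_succ (M := M) (i + 1)
  have hp0 := pp_nonneg hM i
  have hd : dsq i = (1 / ((i:ℝ) + 1))^2 := rfl
  have hi1 : (0:ℝ) < (i:ℝ) + 1 := by positivity
  have hi2 : (0:ℝ) < (i:ℝ) + 2 := by positivity
  -- pp (i+2) = M^2 * pp i / ((i+1)(i+2))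
  have key : ((i:ℝ) + 1) * ((i:ℝ) + 2) * pp M (i + 2) = M ^ 2 * pp M i := by
    push_cast at h2
    nlinarith [h1, h2]
  rw [hd]
  rw [div_mul_eq_mul_div, ← sub_nonneg]
  have hM' := hM.le
  have expand : 2 * pp M (i+2) / M - (1 / ((i:ℝ)+1))^2 * (M * pp M i)
      = pp M i * M * (2*((i:ℝ)+1) - ((i:ℝ)+2)) / (((i:ℝ)+1)^2*((i:ℝ)+2)) := by
    field_simp
    linear_combination (2*((i:ℝ)+1)) * key
  rw [expand]
  have : (0:ℝ) ≤ 2*((i:ℝ)+1) - ((i:ℝ)+2) := by push_cast; linarith [Nat.cast_nonneg (α := ℝ) i]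
  positivity

include hM in
lemma step3 : ∑' i : ℕ, ENNReal.ofReal (dsq i * (M * pp M i)) ≤ ENNReal.ofReal (2 / M) := by
  have hsum2 : Summable (fun i => pp M (i + 2)) :=
    (summable_nat_add_iff 2).mpr (summable_pp hM)
  calc ∑' i : ℕ, ENNReal.ofReal (dsq i * (M * pp M i))
      ≤ ∑' i : ℕ, ENNReal.ofReal ((2 / M) * pp M (i + 2)) :=
        ENNReal.tsum_le_tsum fun i => ENNReal.ofReal_le_ofReal (pointwise_final hM i)
    _ = ENNReal.ofReal (∑' i, (2 / M) * pp M (i + 2)) := by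
        rw [ENNReal.ofReal_tsum_of_nonneg
          (fun i => mul_nonneg (by positivity) (pp_nonneg hM _)) (hsum2.mul_left _)]
    _ ≤ ENNReal.ofReal (2 / M) := by
        refine ENNReal.ofReal_le_ofReal ?_
        rw [tsum_mul_left]
        have htail : ∑' i, pp M (i + 2) ≤ 1 := by
          have key := Summable.sum_add_tsum_nat_add (f := pp M) 2 (summable_pp hM)
          rw [tsum_pp hM] at key
          have hfin : 0 ≤ ∑ i ∈ Finset.range 2, pp M i :=
            Finset.sum_nonneg fun i _ => pp_nonneg hM i
          linarith
        calc 2 / M * ∑' i, pp M (i + 2) ≤ 2 / M * 1 :=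
              mul_le_mul_of_nonneg_left htail (by positivity)
          _ = 2 / M := mul_one _

end PHAux

theorem poisson_harmonic_variance_le (M : ℝ) (hM : 0 < M) :
    (∑' k : ℕ, (M ^ k * Real.exp (-M) / Nat.factorial k) *
        (harmonicR k - ∑' j : ℕ, (M ^ j * Real.exp (-M) / Nat.factorial j) * harmonicR j) ^ 2)
      ≤ 2 / M := by
  open PHAux in
  have hvar : (∑' k : ℕ, (M ^ k * Real.exp (-M) / Nat.factorial k) *
      (harmonicR k - ∑' j : ℕ, (M ^ j * Real.exp (-M) / Nat.factorial j) * harmonicR j) ^ 2)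
      = ∑' k, pp M k * (harmonicR k - mu M) ^ 2 := rfl
  rw [hvar]
  have h1 := PHAux.var_eq_tsum_tt hM
  have h2 : ENNReal.ofReal (∑' x : ℕ × ℕ, PHAux.tt M x)
      = ∑' x : ℕ × ℕ, ENNReal.ofReal (PHAux.tt M x) :=
    ENNReal.ofReal_tsum_of_nonneg (PHAux.tt_nonneg hM) (PHAux.summable_tt hM)
  have h3 : (∑' x : ℕ × ℕ, ENNReal.ofReal (PHAux.tt M x)) ≤ ENNReal.ofReal (2 / M) :=
    le_trans (PHAux.step1 hM) (le_of_eq (PHAux.step2 hM) |>.trans (PHAux.step3 hM))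
  rw [h1]
  have h4 : ENNReal.ofReal (∑' x : ℕ × ℕ, PHAux.tt M x) ≤ ENNReal.ofReal (2 / M) := by
    rw [h2]; exact h3
  exact (ENNReal.ofReal_le_ofReal_iff (by positivity)).mp h4
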